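/- For every state p ∈ S and every antichain T ⊆ S with p ∉ T, one has Σ_{i∈T∩sub(p)} π(i) ≤ (1−θ)·π(p); equivalently, the degeneracy parameter κ = 1 − Σ_{i∈T∩sub(p)} π(i)/π(p) satisfies κ ≥ θ. -/
import Mathlib


open scoped Classical
open Finset

/-- A finite tree-structured Markov chain: a finite state space partitioned into
levels `0, …, L-1`, a root `r` at level `0`, a parent map `pa` (with `pa r = r` by
convention), and transition probabilities `p i ∈ (0,1]` of being reached from the
parent, with `p r = 1`. -/
structure TreeMC (S : Type*) [Fintype S] [DecidableEq S] where
  /-- the number of levels -/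
  L : ℕ
  /-- the root -/
  r : S
  /-- the parent map (with `pa r = r` by convention) -/
  pa : S → S
  /-- the level of each state -/
  level : S → ℕ
  /-- the probability of being reached from the parent -/
  p : S → ℝ
  level_lt : ∀ i, level i < L
  level_r : level r = 0
  root_unique : ∀ i, level i = 0 → i = r
  pa_r : pa r = r
  level_pa : ∀ i, i ≠ r → level (pa i) + 1 = level i
  p_pos : ∀ i, 0 < p i
  p_le_one : ∀ i, p i ≤ 1
  p_r : p r = 1

namespace TreeMC

variable {S : Type*} [Fintype S] [DecidableEq S] (M : TreeMC S)

/-- The ancestors of `i`: states on the path from the root to `i` (both included). -/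
noncomputable def anc (i : S) : Finset S :=
  Finset.univ.filter fun a => ∃ n : ℕ, M.pa^[n] i = a

/-- The subtree of `i`: all states having `i` as an ancestor. -/
noncomputable def subt (i : S) : Finset S :=
  Finset.univ.filter fun k => i ∈ M.anc k

/-- The subtree of a set of states. -/
noncomputable def subF (X : Finset S) : Finset S :=
  Finset.univ.filter fun k => ∃ i ∈ X, k ∈ M.subt i

/-- `π i`: the probability that a job passes through state `i`. -/
noncomputable def pi (i : S) : ℝ :=
  ∏ a ∈ M.anc i, M.p a

/-- The children of `i`. -/
noncomputable def child (i : S) : Finset S :=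
  Finset.univ.filter fun k => k ≠ M.r ∧ M.pa k = i

/-- `T` is the top set of `X`: a subset of `X` whose subtree covers `X` and in which
no state lies in the subtree of a different state. -/
def IsTopSet (X T : Finset S) : Prop :=
  T ⊆ X ∧ X ⊆ M.subF T ∧ ∀ i ∈ T, ∀ k ∈ T, i ≠ k → k ∉ M.subt i

/-- Expected future cost conditional on being in state `a`. -/
noncomputable def cf (c : S → ℝ) (a : S) : ℝ :=
  ∑ i ∈ M.subt a, c i * M.pi i / M.pi a

/-- `V` is the ski-rental value function:
`V γ i = min (γ, c i + Σ_{k ∈ child i} p k · V γ k)`. -/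
def IsSkiValue (c : S → ℝ) (V : ℝ → S → ℝ) : Prop :=
  ∀ γ : ℝ, ∀ i : S, V γ i = min γ (c i + ∑ k ∈ M.child i, M.p k * V γ k)

/-- Expected future cost-to-go `V^f`. -/
noncomputable def Vf (V : ℝ → S → ℝ) (γ : ℝ) (i : S) : ℝ :=
  ∑ k ∈ M.child i, M.p k * V γ k

/-- The candidate optimal state duals `β*(γ)`. -/
noncomputable def betaStar (c : S → ℝ) (V : ℝ → S → ℝ) (γ : ℝ) (i : S) : ℝ :=
  max 0 (c i + M.Vf V γ i - γ)

/-- Feasibility for the dual program `D*(γ)`. -/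
def DualFeasible (c : S → ℝ) (γ : ℝ) (β : S → ℝ) : Prop :=
  (∀ i, 0 ≤ β i) ∧ ∀ a, M.cf c a ≤ γ + ∑ i ∈ M.subt a, β i * M.pi i / M.pi a

/-- Feasibility for the fluid LP (OriginalFluid). -/
def OrigFeasible (lam mu : ℝ) (q ν : S → ℝ) : Prop :=
  (∀ i, 0 ≤ q i) ∧ (∀ i, 0 ≤ ν i) ∧ q M.r = lam ∧
    (∀ i, i ≠ M.r → q i = (q (M.pa i) - ν (M.pa i)) * M.p i) ∧
    (∀ i, ν i ≤ q i) ∧ ∑ i : S, ν i ≤ mu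

/-- Feasibility for the fluid LP (SimplerFluid). -/
def SimpFeasible (lam mu : ℝ) (ν : S → ℝ) : Prop :=
  (∀ i, 0 ≤ ν i) ∧ (∀ i, ∑ a ∈ M.anc i, ν a * M.pi i / M.pi a ≤ lam * M.pi i) ∧
    ∑ i : S, ν i ≤ mu

end TreeMC

namespace TreeMC

variable {S : Type*} [Fintype S] [DecidableEq S] (M : TreeMC S)

lemma mem_anc_iff {a i : S} : a ∈ M.anc i ↔ ∃ n : ℕ, M.pa^[n] i = a := by
  simp [anc]

lemma self_mem_anc (i : S) : i ∈ M.anc i := M.mem_anc_iff.2 ⟨0, rfl⟩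

lemma level_iter (n : ℕ) (i : S) :
    M.level (M.pa^[n] i) + n ≤ M.level i ∨ M.pa^[n] i = M.r := by
  induction n with
  | zero => left; simp
  | succ n ih =>
    rw [Function.iterate_succ_apply']
    rcases ih with h | h
    · by_cases hr : M.pa^[n] i = M.r
      · right; rw [hr, M.pa_r]
      · left
        have := M.level_pa _ hr
        omega
    · right; rw [h, M.pa_r]

lemma level_le_of_mem_anc {a i : S} (h : a ∈ M.anc i) : M.level a ≤ M.level i := by
  obtain ⟨n, hn⟩ := M.mem_anc_iff.1 h
  rcases M.level_iter n i with h' | h'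
  · rw [hn] at h'; omega
  · rw [← hn, h', M.level_r]; omega

lemma eq_of_mem_anc_level {a i : S} (h : a ∈ M.anc i) (hl : M.level i ≤ M.level a) :
    a = i := by
  obtain ⟨n, hn⟩ := M.mem_anc_iff.1 h
  rcases M.level_iter n i with h' | h'
  · rw [hn] at h'
    have : n = 0 := by omega
    rw [← hn, this]; rfl
  · rw [hn] at h'
    subst h'
    have : M.level i = 0 := by have := M.level_r; omega
    exact (M.root_unique i this).symm

lemma anc_chain {a b i : S} (ha : a ∈ M.anc i) (hb : b ∈ M.anc i) :
    a ∈ M.anc b ∨ b ∈ M.anc a := by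
  obtain ⟨n, hn⟩ := M.mem_anc_iff.1 ha
  obtain ⟨m, hm⟩ := M.mem_anc_iff.1 hb
  rcases le_total n m with h | h
  · right
    refine M.mem_anc_iff.2 ⟨m - n, ?_⟩
    rw [← hn, ← Function.iterate_add_apply, Nat.sub_add_cancel h, hm]
  · left
    refine M.mem_anc_iff.2 ⟨n - m, ?_⟩
    rw [← hm, ← Function.iterate_add_apply, Nat.sub_add_cancel h, hn]

lemma anc_eq_of_level {a b i : S} (ha : a ∈ M.anc i) (hb : b ∈ M.anc i)
    (h : M.level a = M.level b) : a = b := by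
  rcases M.anc_chain ha hb with h' | h'
  · exact M.eq_of_mem_anc_level h' h.ge
  · exact (M.eq_of_mem_anc_level h' h.le).symm

lemma anc_trans {a b c : S} (ha : a ∈ M.anc b) (hb : b ∈ M.anc c) : a ∈ M.anc c := by
  obtain ⟨n, hn⟩ := M.mem_anc_iff.1 ha
  obtain ⟨m, hm⟩ := M.mem_anc_iff.1 hb
  refine M.mem_anc_iff.2 ⟨n + m, ?_⟩
  rw [Function.iterate_add_apply, hm, hn]

lemma mem_subt_iff {k i : S} : k ∈ M.subt i ↔ i ∈ M.anc k := by
  simp [subt]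

lemma not_mem_anc_pa {i : S} (hi : i ≠ M.r) : i ∉ M.anc (M.pa i) := by
  intro h
  have h1 := M.level_le_of_mem_anc h
  have h2 := M.level_pa i hi
  omega

lemma anc_of_ne_root {i : S} (hi : i ≠ M.r) :
    M.anc i = insert i (M.anc (M.pa i)) := by
  ext a
  simp only [Finset.mem_insert, M.mem_anc_iff]
  constructor
  · rintro ⟨n, hn⟩
    cases n with
    | zero => left; exact hn.symm
    | succ n => right; exact ⟨n, by rw [← hn, Function.iterate_succ_apply]⟩
  · rintro (h | ⟨n, hn⟩)
    · exact ⟨0, h.symm⟩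
    · exact ⟨n + 1, by rw [Function.iterate_succ_apply, hn]⟩

lemma pi_pos (i : S) : 0 < M.pi i :=
  Finset.prod_pos fun a _ => M.p_pos a

lemma pi_of_ne_root {k : S} (hk : k ≠ M.r) : M.pi k = M.p k * M.pi (M.pa k) := by
  rw [pi, M.anc_of_ne_root hk, Finset.prod_insert (M.not_mem_anc_pa hk)]
  rfl

lemma mem_child_iff {k i : S} : k ∈ M.child i ↔ k ≠ M.r ∧ M.pa k = i := by
  simp [child]

lemma exists_child_anc {q i : S} (hi : i ∈ M.subt q) (hne : i ≠ q) :
    ∃ k ∈ M.child q, i ∈ M.subt k := by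
  have h : ∃ n : ℕ, M.pa^[n] i = q := M.mem_anc_iff.1 (M.mem_subt_iff.1 hi)
  classical
  have hn : M.pa^[Nat.find h] i = q := Nat.find_spec h
  have hn0 : Nat.find h ≠ 0 := by
    intro h0
    apply hne
    rw [← hn, h0]; rfl
  obtain ⟨m, hm⟩ : ∃ m, Nat.find h = m + 1 := ⟨Nat.find h - 1, by omega⟩
  rw [hm] at hn
  set k := M.pa^[m] i with hk
  have hpk : M.pa k = q := by
    rw [hk, ← hn, Function.iterate_succ_apply']
  have hkr : k ≠ M.r := by
    intro hr
    have hq : q = M.r := by rw [← hpk, hr, M.pa_r]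
    have : M.pa^[m] i = q := by rw [← hk, hr, hq]
    exact absurd this (Nat.find_min h (by omega))
  exact ⟨k, M.mem_child_iff.2 ⟨hkr, hpk⟩, M.mem_subt_iff.2 (M.mem_anc_iff.2 ⟨m, rfl⟩)⟩

lemma subt_subset_of_child {k q : S} (hk : k ∈ M.child q) : M.subt k ⊆ M.subt q := by
  intro i hi
  obtain ⟨hkr, hpk⟩ := M.mem_child_iff.1 hk
  have hq : q ∈ M.anc k := by
    refine M.mem_anc_iff.2 ⟨1, ?_⟩
    simp [hpk]
  exact M.mem_subt_iff.2 (M.anc_trans hq (M.mem_subt_iff.1 hi))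

lemma child_unique {k k' q i : S} (hk : k ∈ M.child q) (hk' : k' ∈ M.child q)
    (hi : i ∈ M.subt k) (hi' : i ∈ M.subt k') : k = k' := by
  obtain ⟨hkr, hpk⟩ := M.mem_child_iff.1 hk
  obtain ⟨hkr', hpk'⟩ := M.mem_child_iff.1 hk'
  refine M.anc_eq_of_level (M.mem_subt_iff.1 hi) (M.mem_subt_iff.1 hi') ?_
  have h1 := M.level_pa k hkr
  have h2 := M.level_pa k' hkr'
  rw [hpk] at h1; rw [hpk'] at h2
  omega

lemma key_bound (θ : ℝ) (hθ : ∀ i, θ ≤ 1 - ∑ k ∈ M.child i, M.p k) (hθ0 : 0 ≤ θ) :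
    ∀ n : ℕ, ∀ q : S, M.L - M.level q ≤ n → ∀ T : Finset S,
      (∀ a ∈ T, ∀ b ∈ T, a ≠ b → b ∉ M.subt a) → q ∉ T →
      ∑ i ∈ T ∩ M.subt q, M.pi i ≤ (1 - θ) * M.pi q := by
  intro n
  induction n with
  | zero =>
    intro q hq
    have := M.level_lt q
    omega
  | succ n ih =>
    intro q hq T hT hqT
    have hdecomp : T ∩ M.subt q = (M.child q).biUnion fun k => T ∩ M.subt k := by
      ext i
      simp only [Finset.mem_inter, Finset.mem_biUnion]
      constructor
      · rintro ⟨hiT, hiq⟩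
        have hne : i ≠ q := fun h => hqT (h ▸ hiT)
        obtain ⟨k, hk, hik⟩ := M.exists_child_anc hiq hne
        exact ⟨k, hk, hiT, hik⟩
      · rintro ⟨k, hk, hiT, hik⟩
        exact ⟨hiT, M.subt_subset_of_child hk hik⟩
    have hdisj : ∀ x ∈ M.child q, ∀ y ∈ M.child q, x ≠ y →
        Disjoint (T ∩ M.subt x) (T ∩ M.subt y) := by
      intro x hx y hy hxy
      rw [Finset.disjoint_left]
      intro i hix hiy
      exact hxy (M.child_unique hx hy (Finset.mem_inter.1 hix).2 (Finset.mem_inter.1 hiy).2)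
    rw [hdecomp, Finset.sum_biUnion hdisj]
    have hchild : ∀ k ∈ M.child q, ∑ i ∈ T ∩ M.subt k, M.pi i ≤ M.pi k := by
      intro k hk
      by_cases hkT : k ∈ T
      · have : T ∩ M.subt k = {k} := by
          ext i
          simp only [Finset.mem_inter, Finset.mem_singleton]
          constructor
          · rintro ⟨hiT, hik⟩
            by_contra hne
            exact hT k hkT i hiT (fun h => hne h.symm) hik
          · rintro rfl
            exact ⟨hkT, M.mem_subt_iff.2 (M.self_mem_anc _)⟩
        rw [this, Finset.sum_singleton]
      · have hkr := (M.mem_child_iff.1 hk).1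
        have hlev : M.level k = M.level q + 1 := by
          have := M.level_pa k hkr
          rw [(M.mem_child_iff.1 hk).2] at this
          omega
        have hq' : M.L - M.level k ≤ n := by
          have := M.level_lt q
          omega
        calc ∑ i ∈ T ∩ M.subt k, M.pi i ≤ (1 - θ) * M.pi k := ih k hq' T hT hkT
          _ ≤ 1 * M.pi k := by
              apply mul_le_mul_of_nonneg_right _ (M.pi_pos k).le
              linarith
          _ = M.pi k := one_mul _
    calc ∑ k ∈ M.child q, ∑ i ∈ T ∩ M.subt k, M.pi i
        ≤ ∑ k ∈ M.child q, M.pi k := Finset.sum_le_sum hchild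
      _ = (∑ k ∈ M.child q, M.p k) * M.pi q := by
          rw [Finset.sum_mul]
          refine Finset.sum_congr rfl fun k hk => ?_
          obtain ⟨hkr, hpk⟩ := M.mem_child_iff.1 hk
          rw [M.pi_of_ne_root hkr, hpk]
      _ ≤ (1 - θ) * M.pi q := by
          apply mul_le_mul_of_nonneg_right _ (M.pi_pos q).le
          have := hθ q
          linarith

end TreeMC

/-- For every state `p ∈ S` and every antichain `T ⊆ S` with `p ∉ T`,
`Σ_{i ∈ T ∩ sub(p)} π(i) ≤ (1 − θ)·π(p)`; equivalently, the degeneracy parameter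
`κ = 1 − Σ_{i ∈ T ∩ sub(p)} π(i)/π(p)` satisfies `κ ≥ θ`. -/
theorem antichain_partial_mass {S : Type*} [Fintype S] [DecidableEq S]
    (M : TreeMC S) (θ : ℝ)
    (hθdef : θ = Finset.univ.inf' ⟨M.r, Finset.mem_univ M.r⟩
      (fun i => 1 - ∑ k ∈ M.child i, M.p k))
    (hθpos : 0 < θ)
    (pnode : S) (T : Finset S)
    (hT : ∀ a ∈ T, ∀ b ∈ T, a ≠ b → b ∉ M.subt a)
    (hpT : pnode ∉ T) :
    ∑ i ∈ T ∩ M.subt pnode, M.pi i ≤ (1 - θ) * M.pi pnode ∧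
      θ ≤ 1 - (∑ i ∈ T ∩ M.subt pnode, M.pi i) / M.pi pnode := by
  have hθ : ∀ i, θ ≤ 1 - ∑ k ∈ M.child i, M.p k := by
    intro i
    rw [hθdef]
    exact Finset.inf'_le _ (Finset.mem_univ i)
  have h1 : ∑ i ∈ T ∩ M.subt pnode, M.pi i ≤ (1 - θ) * M.pi pnode :=
    M.key_bound θ hθ hθpos.le (M.L) pnode (by omega) T hT hpT
  refine ⟨h1, ?_⟩
  have hπ := M.pi_pos pnode
  rw [le_sub_iff_add_le, ← le_sub_iff_add_le', div_le_iff₀ hπ]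
  linarith
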